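/- Let P be a polynomial of exact degree n with real coefficients, n simple real zeros, |P(y)| ≥ 1 at all critical points y, and let A := {x ∈ ℝ : −1 ≤ P(x) ≤ 1}. If 0 ∉ A but 0 lies in the convex hull of A (i.e., min A < 0 < max A), then L_{n+1}(A) = L_n(A) = 1/|P(0)|, where L_m(A) := min{‖Q‖_A : deg Q ≤ m, Q(0)=1}. -/

import Mathlib

open Polynomial Set

private lemma signConst {P : ℝ[X]} {a b : ℝ} (hab : a ≤ b)
    (h : ∀ z ∈ Set.Icc a b, P.eval z ≠ 0) : 0 < P.eval a * P.eval b := by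
  have ha := h a ⟨le_rfl, hab⟩
  have hb := h b ⟨hab, le_rfl⟩
  rcases lt_or_gt_of_ne ha with ha' | ha' <;> rcases lt_or_gt_of_ne hb with hb' | hb'
  · nlinarith
  · obtain ⟨z, hz, hz0⟩ := intermediate_value_Icc hab (P.continuous.continuousOn)
      (⟨ha'.le, hb'.le⟩ : (0:ℝ) ∈ Set.Icc _ _)
    exact absurd hz0 (h z hz)
  · obtain ⟨z, hz, hz0⟩ := intermediate_value_Icc' hab (P.continuous.continuousOn)
      (⟨hb'.le, ha'.le⟩ : (0:ℝ) ∈ Set.Icc _ _)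
    exact absurd hz0 (h z hz)
  · nlinarith

private lemma rootIoo {R : ℝ[X]} {a b : ℝ} (hab : a < b) (h : R.eval a * R.eval b < 0) :
    ∃ z ∈ Set.Ioo a b, R.eval z = 0 := by
  have ha : R.eval a ≠ 0 := by intro h0; rw [h0, zero_mul] at h; exact lt_irrefl 0 h
  have hb : R.eval b ≠ 0 := by intro h0; rw [h0, mul_zero] at h; exact lt_irrefl 0 h
  have key : ∃ z ∈ Set.Icc a b, R.eval z = 0 := by
    rcases lt_or_gt_of_ne ha with ha' | ha'
    · have hb' : 0 < R.eval b := by nlinarith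
      obtain ⟨z, hz, hz0⟩ := intermediate_value_Icc hab.le (R.continuous.continuousOn)
        (⟨ha'.le, hb'.le⟩ : (0:ℝ) ∈ Set.Icc _ _)
      exact ⟨z, hz, hz0⟩
    · have hb' : R.eval b < 0 := by nlinarith
      obtain ⟨z, hz, hz0⟩ := intermediate_value_Icc' hab.le (R.continuous.continuousOn)
        (⟨hb'.le, ha'.le⟩ : (0:ℝ) ∈ Set.Icc _ _)
      exact ⟨z, hz, hz0⟩
  obtain ⟨z, hz, hz0⟩ := key
  refine ⟨z, ⟨hz.1.lt_of_ne ?_, hz.2.lt_of_ne ?_⟩, hz0⟩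
  · intro he; exact ha (he ▸ hz0)
  · intro he; exact hb (he ▸ hz0)

private lemma absOne {P : ℝ[X]} {a b : ℝ} (ha : |P.eval a| ≤ 1) (hb : 1 ≤ |P.eval b|) :
    ∃ c ∈ Set.uIcc a b, |P.eval c| = 1 := by
  have hcont : ContinuousOn (fun t => |P.eval t|) (Set.uIcc a b) :=
    (P.continuous.abs).continuousOn
  have h1 : (1:ℝ) ∈ Set.uIcc (|P.eval a|) (|P.eval b|) := Set.mem_uIcc.2 (Or.inl ⟨ha, hb⟩)
  obtain ⟨c, hc, hc1⟩ := intermediate_value_uIcc hcont h1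
  exact ⟨c, hc, hc1⟩

private lemma signFlip {P : ℝ[X]} (hP : P ≠ 0) (hnd : P.roots.Nodup) {a b c : ℝ}
    (hac : a < c) (hcb : c < b) (hc : P.eval c = 0)
    (honly : ∀ z ∈ Set.Icc a b, P.eval z = 0 → z = c) :
    P.eval a * P.eval b < 0 := by
  classical
  set S := P / (X - C c) with hS
  have hfac : (X - C c) * S = P := mul_div_eq_iff_isRoot.2 hc
  have hS0 : S ≠ 0 := by
    intro h; rw [h, mul_zero] at hfac; exact hP hfac.symm
  have hScne : S.eval c ≠ 0 := by
    intro h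
    have hmul : (X - C c) * S ≠ 0 := by rw [hfac]; exact hP
    have hrr : P.roots = (X - C c).roots + S.roots := by
      conv_lhs => rw [← hfac]
      exact roots_mul hmul
    have hcount : P.roots.count c ≤ 1 := Multiset.nodup_iff_count_le_one.1 hnd c
    have hcS : c ∈ S.roots := mem_roots'.2 ⟨hS0, h⟩
    have hthis : P.roots.count c = (X - C c).roots.count c + S.roots.count c := by
      rw [hrr, Multiset.count_add]
    rw [roots_X_sub_C, Multiset.count_singleton, if_pos rfl] at hthis
    have h1 := Multiset.one_le_count_iff_mem.2 hcS
    omega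
  have hnoroot : ∀ z ∈ Set.Icc a b, S.eval z ≠ 0 := by
    intro z hz h
    have hz0 : P.eval z = 0 := by
      rw [← hfac]; simp [h]
    exact hScne ((honly z hz hz0) ▸ h)
  have hpos := signConst (le_of_lt (hac.trans hcb)) hnoroot
  have hea : P.eval a = (a - c) * S.eval a := by rw [← hfac]; simp
  have heb : P.eval b = (b - c) * S.eval b := by rw [← hfac]; simp
  rw [hea, heb]
  have h1 : (a - c) * (b - c) < 0 := by nlinarith
  nlinarith [mul_neg_of_neg_of_pos h1 hpos]

noncomputable def supNorm (S : Set ℝ) (P : ℝ[X]) : ℝ := sSup ((fun x => |P.eval x|) '' S)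

theorem minimal_residual_gap (n : ℕ) (hn : 1 ≤ n) (P : ℝ[X])
    (hdeg : P.natDegree = n)
    (hroots : P.roots.card = n ∧ P.roots.Nodup)
    (hcrit : ∀ y : ℝ, P.derivative.eval y = 0 → 1 ≤ |P.eval y|)
    (A : Set ℝ) (hA : A = {x : ℝ | P.eval x ∈ Set.Icc (-1 : ℝ) 1})
    (h0 : (0 : ℝ) ∉ A)
    (hhull : (∃ x ∈ A, x < 0) ∧ (∃ y ∈ A, 0 < y)) :
    supNorm A (Polynomial.C (P.eval 0)⁻¹ * P) = 1 / |P.eval 0| ∧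
    (∀ Q : ℝ[X], Q.degree ≤ n → Q.eval 0 = 1 → 1 / |P.eval 0| ≤ supNorm A Q) ∧
    (∀ Q : ℝ[X], Q.degree ≤ (n + 1 : ℕ) → Q.eval 0 = 1 → 1 / |P.eval 0| ≤ supNorm A Q) := by
  classical
  obtain ⟨hcard, hnd⟩ := hroots
  set K := P.eval 0 with hKdef
  have hP0 : P ≠ 0 := by
    intro h; rw [h] at hdeg; simp at hdeg; omega
  have hK : 1 < |K| := by
    by_contra h
    push_neg at h
    exact h0 (by rw [hA]; exact Set.mem_setOf.2 (abs_le.1 h))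
  have hKne : K ≠ 0 := by intro h; rw [h] at hK; simp at hK; linarith
  have hmemA : ∀ t : ℝ, t ∈ A ↔ |P.eval t| ≤ 1 := by
    intro t; rw [hA]; simp only [Set.mem_setOf_eq, Set.mem_Icc]
    exact ⟨fun h => abs_le.2 h, fun h => abs_le.1 h⟩
  have hdegpos : 0 < P.degree := by
    apply natDegree_pos_iff_degree_pos.mp; rw [hdeg]; exact hn
  obtain ⟨N₁, hN₁⟩ := Filter.eventually_atTop.1
    ((P.abs_tendsto_atTop hdegpos).eventually_ge_atTop 2)
  have hPc : ∀ t : ℝ, (P.comp (-X)).eval t = P.eval (-t) := by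
    intro t; rw [eval_comp]; simp
  have hPcdeg : 0 < (P.comp (-X)).degree := by
    apply natDegree_pos_iff_degree_pos.mp
    rw [natDegree_comp, natDegree_neg, natDegree_X, hdeg]; omega
  obtain ⟨N₂, hN₂⟩ := Filter.eventually_atTop.1
    (((P.comp (-X)).abs_tendsto_atTop hPcdeg).eventually_ge_atTop 2)
  have hfarR : ∀ t : ℝ, N₁ ≤ t → 2 ≤ |P.eval t| := hN₁
  have hfarL : ∀ t : ℝ, t ≤ -N₂ → 2 ≤ |P.eval t| := by
    intro t ht
    have h2 := hN₂ (-t) (by linarith)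
    rwa [hPc, neg_neg] at h2
  have hAsub : A ⊆ Set.Icc (-N₂) N₁ := by
    intro t ht
    have h1 := (hmemA t).1 ht
    constructor
    · by_contra h; push_neg at h; have := hfarL t (by linarith); linarith
    · by_contra h; push_neg at h; have := hfarR t (by linarith); linarith
  have hAclosed : IsClosed A := by
    rw [hA]; exact isClosed_Icc.preimage P.continuous
  have hAcomp : IsCompact A := isCompact_Icc.of_isClosed_subset hAclosed hAsub
  -- sorted roots
  have hTcard : P.roots.toFinset.card = n :=
    (Multiset.toFinset_card_eq_card_iff_nodup.mpr hnd).trans hcard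
  have iso := P.roots.toFinset.orderIsoOfFin hTcard
  set x : ℕ → ℝ := fun i => if h : i < n then (iso ⟨i, h⟩ : ℝ) else 0 with hx
  have hxroot : ∀ i, i < n → P.eval (x i) = 0 := by
    intro i hi
    have hm : (x i) ∈ P.roots := by
      simp only [hx, dif_pos hi]
      exact Multiset.mem_toFinset.1 (iso ⟨i, hi⟩).2
    exact (mem_roots'.1 hm).2
  have hxmono : ∀ i j, i < n → j < n → (i < j ↔ x i < x j) := by
    intro i j hi hj
    simp only [hx, dif_pos hi, dif_pos hj]
    constructor
    · intro h
      exact Subtype.coe_lt_coe.2 (iso.lt_iff_lt.2 (Fin.mk_lt_mk.2 h))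
    · intro h
      exact Fin.mk_lt_mk.1 (iso.lt_iff_lt.1 (Subtype.coe_lt_coe.1 h))
  have hxcomp : ∀ z, P.eval z = 0 → ∃ i, i < n ∧ z = x i := by
    intro z hz
    have hzT : z ∈ P.roots.toFinset := Multiset.mem_toFinset.2 (mem_roots'.2 ⟨hP0, hz⟩)
    refine ⟨(iso.symm ⟨z, hzT⟩).1, (iso.symm ⟨z, hzT⟩).2, ?_⟩
    simp only [hx, dif_pos (iso.symm ⟨z, hzT⟩).2]
    have h1 : (⟨(iso.symm ⟨z, hzT⟩).1, (iso.symm ⟨z, hzT⟩).2⟩ : Fin n) = iso.symm ⟨z, hzT⟩ := rfl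
    rw [h1, OrderIso.apply_symm_apply]
  have hxne : ∀ i, i < n → x i ≠ 0 := by
    intro i hi h
    have h2 := hxroot i hi; rw [h] at h2; exact hKne (by rw [hKdef]; exact h2)
  set k := ((Finset.range n).filter (fun i => x i < 0)).card with hk
  have hkn : k ≤ n := by
    rw [hk]
    calc _ ≤ (Finset.range n).card := Finset.card_filter_le _ _
    _ = n := Finset.card_range n
  have hklt : ∀ i, i < n → (x i < 0 ↔ i < k) := by
    intro i hi
    constructor
    · intro hneg
      have hsub : Finset.range (i+1) ⊆ (Finset.range n).filter (fun i => x i < 0) := by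
        intro j hj
        rw [Finset.mem_range] at hj
        refine Finset.mem_filter.2 ⟨Finset.mem_range.2 (by omega), ?_⟩
        show x j < 0
        rcases eq_or_lt_of_le (Nat.lt_succ_iff.1 hj) with h | h
        · rwa [h]
        · exact lt_trans ((hxmono j i (by omega) hi).1 h) hneg
      have h2 := Finset.card_le_card hsub
      rw [Finset.card_range] at h2; omega
    · intro hik
      by_contra hpos
      push_neg at hpos
      have hsub : (Finset.range n).filter (fun i => x i < 0) ⊆ Finset.range i := by
        intro j hj
        rw [Finset.mem_filter, Finset.mem_range] at hj
        have hj2 : x j < 0 := hj.2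
        rw [Finset.mem_range]
        by_contra hji
        push_neg at hji
        rcases eq_or_lt_of_le hji with h | h
        · rw [h] at hpos; linarith
        · have := (hxmono i j hi hj.1).1 h; linarith
      have h2 := Finset.card_le_card hsub
      rw [Finset.card_range] at h2; omega
  have hxpos : ∀ i, k ≤ i → i < n → 0 < x i := by
    intro i h1 h2
    rcases lt_trichotomy (x i) 0 with h | h | h
    · have := (hklt i h2).1 h; omega
    · exact absurd h (hxne i h2)
    · exact h
  have hxneg : ∀ i, i < k → x i < 0 := by
    intro i h1
    exact (hklt i (by omega)).2 h1
  -- Rolle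
  have hrolle : ∀ i, i + 1 < n → ∃ y, x i < y ∧ y < x (i+1) ∧ 1 ≤ |P.eval y| := by
    intro i hi
    have hlt : x i < x (i+1) := (hxmono i (i+1) (by omega) hi).1 (by omega)
    obtain ⟨y, hy, hy0⟩ := exists_deriv_eq_zero (f := fun t : ℝ => P.eval t) hlt
      P.continuous.continuousOn
      (by show P.eval (x i) = P.eval (x (i+1)); rw [hxroot i (by omega), hxroot (i+1) hi])
    rw [Polynomial.deriv] at hy0
    exact ⟨y, hy.1, hy.2, hcrit y hy0⟩
  -- interval points
  have hcpt : ∀ i : ℕ, ∃ cc : ℝ, (i ≤ n → |P.eval cc| = 1) ∧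
      (1 ≤ i → i ≤ n → x (i-1) < cc) ∧ (i < n → cc < x i) := by
    intro i
    by_cases hi : i ≤ n
    · rcases Nat.eq_zero_or_pos i with rfl | hipos
      · have h0n : 0 < n := hn
        have hw1 : 1 ≤ |P.eval (min (-N₂) (x 0 - 1))| := by
          have := hfarL (min (-N₂) (x 0 - 1)) (min_le_left _ _); linarith
        have hwx : min (-N₂) (x 0 - 1) < x 0 :=
          lt_of_le_of_lt (min_le_right _ _) (by linarith)
        obtain ⟨cc, hcmem, hcabs⟩ := absOne (a := x 0) (b := min (-N₂) (x 0 - 1))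
          (by rw [hxroot 0 h0n]; simp) hw1
        rw [Set.uIcc_of_ge hwx.le] at hcmem
        refine ⟨cc, fun _ => hcabs, fun h _ => absurd h (by omega), fun _ => ?_⟩
        rcases eq_or_lt_of_le hcmem.2 with h | h
        · rw [h, hxroot 0 h0n] at hcabs; norm_num at hcabs
        · exact h
      · rcases eq_or_lt_of_le hi with rfl | hilt
        · have hw1 : 1 ≤ |P.eval (max N₁ (x (i-1) + 1))| := by
            have := hfarR (max N₁ (x (i-1) + 1)) (le_max_left _ _); linarith
          have hwx : x (i-1) < max N₁ (x (i-1) + 1) :=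
            lt_of_lt_of_le (by linarith) (le_max_right _ _)
          obtain ⟨cc, hcmem, hcabs⟩ := absOne (a := x (i-1)) (b := max N₁ (x (i-1) + 1))
            (by rw [hxroot (i-1) (by omega)]; simp) hw1
          rw [Set.uIcc_of_le hwx.le] at hcmem
          refine ⟨cc, fun _ => hcabs, fun _ _ => ?_, fun h => absurd h (by omega)⟩
          rcases eq_or_lt_of_le hcmem.1 with h | h
          · rw [← h, hxroot (i-1) (by omega)] at hcabs; norm_num at hcabs
          · exact h
        · obtain ⟨y, hy1, hy2, hy3⟩ := hrolle (i-1) (by omega)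
          have hind : i - 1 + 1 = i := by omega
          rw [hind] at hy2
          obtain ⟨cc, hcmem, hcabs⟩ := absOne (a := x (i-1)) (b := y)
            (by rw [hxroot (i-1) (by omega)]; simp) hy3
          rw [Set.uIcc_of_le hy1.le] at hcmem
          refine ⟨cc, fun _ => hcabs, fun _ _ => ?_, fun _ => lt_of_le_of_lt hcmem.2 hy2⟩
          rcases eq_or_lt_of_le hcmem.1 with h | h
          · rw [← h, hxroot (i-1) (by omega)] at hcabs; norm_num at hcabs
          · exact h
    · exact ⟨0, fun h => absurd h hi, fun _ h => absurd h hi, fun h => absurd h (by omega)⟩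
  choose c hc1 hc2 hc3 using hcpt
  -- gap points d, e
  have hd : ∃ d : ℝ, d < 0 ∧ |P.eval d| = 1 ∧ (1 ≤ k → x (k-1) < d) := by
    have hstart : ∃ a : ℝ, a < 0 ∧ |P.eval a| ≤ 1 ∧ (1 ≤ k → x (k-1) ≤ a) := by
      rcases Nat.eq_zero_or_pos k with hk0 | hkpos
      · obtain ⟨a, haA, ha0⟩ := hhull.1
        exact ⟨a, ha0, (hmemA a).1 haA, fun h => absurd h (by omega)⟩
      · refine ⟨x (k-1), hxneg (k-1) (by omega), ?_, fun _ => le_rfl⟩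
        rw [hxroot (k-1) (by omega)]; simp
    obtain ⟨a, ha0, ha1, ha2⟩ := hstart
    obtain ⟨d, hdmem, hdabs⟩ := absOne (a := a) (b := 0) ha1 (by rw [← hKdef]; exact hK.le)
    rw [Set.uIcc_of_le ha0.le] at hdmem
    have hd0 : d < 0 := by
      rcases eq_or_lt_of_le hdmem.2 with h | h
      · exfalso; rw [h] at hdabs; rw [← hKdef] at hdabs; rw [hdabs] at hK; linarith
      · exact h
    refine ⟨d, hd0, hdabs, fun hk1 => ?_⟩
    rcases eq_or_lt_of_le (le_trans (ha2 hk1) hdmem.1) with h | h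
    · exfalso; rw [← h, hxroot (k-1) (by omega)] at hdabs; norm_num at hdabs
    · exact h
  have he : ∃ e : ℝ, 0 < e ∧ |P.eval e| = 1 ∧ (k < n → e < x k) := by
    have hstart : ∃ b : ℝ, 0 < b ∧ |P.eval b| ≤ 1 ∧ (k < n → b ≤ x k) := by
      by_cases hkn' : k < n
      · refine ⟨x k, hxpos k le_rfl hkn', ?_, fun _ => le_rfl⟩
        rw [hxroot k hkn']; simp
      · obtain ⟨b, hbA, hb0⟩ := hhull.2
        exact ⟨b, hb0, (hmemA b).1 hbA, fun h => absurd h hkn'⟩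
    obtain ⟨b, hb0, hb1, hb2⟩ := hstart
    obtain ⟨e, hemem, heabs⟩ := absOne (a := b) (b := 0) hb1 (by rw [← hKdef]; exact hK.le)
    rw [Set.uIcc_of_ge hb0.le] at hemem
    have he0 : 0 < e := by
      rcases eq_or_lt_of_le hemem.1 with h | h
      · exfalso; rw [← h] at heabs; rw [← hKdef] at heabs; rw [heabs] at hK; linarith
      · exact h
    refine ⟨e, he0, heabs, fun hk1 => ?_⟩
    rcases eq_or_lt_of_le (le_trans hemem.2 (hb2 hk1)) with h | h
    · exfalso; rw [h, hxroot k hk1] at heabs; norm_num at heabs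
    · exact h
  obtain ⟨d, hd0, hdabs, hdlo⟩ := hd
  obtain ⟨e, he0, heabs, hehi⟩ := he
  set p : ℕ → ℝ := fun j => if j < k then c j else if j = k then d
    else if j = k+1 then e else c (j-1) with hp
  have hpc1 : ∀ j, j < k → p j = c j := by
    intro j h; simp only [hp]; rw [if_pos h]
  have hpc2 : p k = d := by
    simp only [hp]; rw [if_neg (by omega : ¬ k < k)]; simp
  have hpc3 : p (k+1) = e := by
    simp only [hp]; rw [if_neg (by omega : ¬ k + 1 < k), if_neg (by omega : ¬ k + 1 = k)]
    simp
  have hpc4 : ∀ j, k+1 < j → p j = c (j-1) := by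
    intro j h; simp only [hp]
    rw [if_neg (by omega), if_neg (by omega), if_neg (by omega)]
  have habs : ∀ j, j ≤ n+1 → |P.eval (p j)| = 1 := by
    intro j hj
    rcases lt_trichotomy j k with h | h | h
    · rw [hpc1 j h]; exact hc1 j (by omega)
    · rw [h, hpc2]; exact hdabs
    · rcases eq_or_lt_of_le (Nat.succ_le_of_lt h) with h' | h'
      · rw [← h', hpc3]; exact heabs
      · rw [hpc4 j h']; exact hc1 (j-1) (by omega)
  have hinc : ∀ j, j ≤ n → p j < p (j+1) := by
    intro j hj
    rcases lt_trichotomy (j+1) k with h | h | h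
    · rw [hpc1 j (by omega), hpc1 (j+1) h]
      have h2 := hc2 (j+1) (by omega) (by omega)
      simp only [Nat.add_sub_cancel] at h2
      exact lt_trans (hc3 j (by omega)) h2
    · rw [hpc1 j (by omega), h, hpc2]
      have h1 := hc3 j (by omega)
      have h2 := hdlo (by omega)
      have hje : j = k - 1 := by omega
      rw [← hje] at h2
      linarith
    · have hkj : k ≤ j := by omega
      rcases eq_or_lt_of_le hkj with h' | h'
      · rw [← h', hpc2, hpc3]; linarith
      · rcases eq_or_lt_of_le (Nat.succ_le_of_lt h') with h'' | h''
        · rw [← h'', hpc3, hpc4 (k+1+1) (by omega)]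
          have h1 : e < x k := hehi (by omega)
          have h2 := hc2 (k+1) (by omega) (by omega)
          simp only [Nat.add_sub_cancel] at h2
          have hent : k+1+1 - 1 = k+1 := by omega
          rw [hent]
          linarith
        · rw [hpc4 j h'', hpc4 (j+1) (by omega)]
          have h1 : c (j-1) < x (j-1) := hc3 (j-1) (by omega)
          have h2 : x (j-1) < c j := hc2 j (by omega) hj
          have hent : j+1 - 1 = j := by omega
          rw [hent]
          linarith
  have hflipgen : ∀ (a b : ℝ) (i : ℕ), i < n → a < x i → x i < b →
      (1 ≤ i → x (i-1) < a) → (i+1 < n → b < x (i+1)) → P.eval a * P.eval b < 0 := by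
    intro a b i hin ha hb hlo hhi
    apply signFlip hP0 hnd ha hb (hxroot i hin)
    intro z hz hz0
    obtain ⟨m, hm, rfl⟩ := hxcomp z hz0
    rcases lt_trichotomy m i with h | h | h
    · exfalso
      have hxa : x m < a := by
        rcases eq_or_lt_of_le (Nat.le_sub_one_of_lt h) with h' | h'
        · rw [h']; exact hlo (by omega)
        · exact lt_trans ((hxmono m (i-1) hm (by omega)).1 h') (hlo (by omega))
      linarith [hz.1]
    · rw [h]
    · exfalso
      have hxb : b < x m := by
        by_cases hi1 : i+1 < n
        · rcases eq_or_lt_of_le (Nat.succ_le_of_lt h) with h' | h'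
          · rw [← h']; exact hhi hi1
          · exact lt_trans (hhi hi1) ((hxmono (i+1) m hi1 hm).1 h')
        · omega
      linarith [hz.2]
  have hflip : ∀ j, j ≤ n → j ≠ k → P.eval (p j) * P.eval (p (j+1)) < 0 := by
    intro j hj hjk
    rcases lt_trichotomy (j+1) k with h | h | h
    · rw [hpc1 j (by omega), hpc1 (j+1) h]
      refine hflipgen (c j) (c (j+1)) j (by omega) (hc3 j (by omega)) ?_
        (fun h1 => hc2 j h1 (by omega)) (fun h1 => hc3 (j+1) h1)
      have h2 := hc2 (j+1) (by omega) (by omega)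
      simpa using h2
    · rw [hpc1 j (by omega), h, hpc2]
      refine hflipgen (c j) d j (by omega) (hc3 j (by omega)) ?_
        (fun h1 => hc2 j h1 (by omega)) (fun h1 => ?_)
      · have h2 := hdlo (by omega)
        have hje : j = k - 1 := by omega
        rw [hje]; exact h2
      · have h2 : 0 < x (j+1) := hxpos (j+1) (by omega) h1
        linarith
    · have hkj : k < j := by omega
      rcases eq_or_lt_of_le (Nat.succ_le_of_lt hkj) with h' | h'
      · rw [← h', hpc3, hpc4 (k+1+1) (by omega)]
        have hent : k+1+1 - 1 = k+1 := by omega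
        rw [hent]
        have hkltn : k < n := by omega
        refine hflipgen e (c (k+1)) k hkltn (hehi hkltn) ?_ (fun h1 => ?_)
          (fun h1 => hc3 (k+1) h1)
        · have h2 := hc2 (k+1) (by omega) (by omega)
          simpa using h2
        · have h2 : x (k-1) < 0 := hxneg (k-1) (by omega)
          linarith
      · rw [hpc4 j h', hpc4 (j+1) (by omega)]
        have hent : j+1 - 1 = j := by omega
        rw [hent]
        refine hflipgen (c (j-1)) (c j) (j-1) (by omega) (hc3 (j-1) (by omega)) ?_
          (fun h1 => hc2 (j-1) (by omega) (by omega)) (fun h1 => ?_)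
        · exact hc2 j (by omega) hj
        · have h2 : j - 1 + 1 = j := by omega
          rw [h2]; exact hc3 j (by omega)
  have hsame : 0 < P.eval (p k) * P.eval (p (k+1)) := by
    rw [hpc2, hpc3]
    apply signConst (by linarith : d ≤ e)
    intro z hz h0z
    obtain ⟨m, hm, rfl⟩ := hxcomp z h0z
    rcases lt_or_ge m k with h | h
    · have h1 : x m ≤ x (k-1) := by
        rcases eq_or_lt_of_le (Nat.le_sub_one_of_lt h) with h' | h'
        · exact le_of_eq (by rw [h'])
        · exact le_of_lt ((hxmono m (k-1) hm (by omega)).1 h')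
      have h2 := hdlo (by omega)
      linarith [hz.1]
    · have hkn' : k < n := by omega
      have h1 : x k ≤ x m := by
        rcases eq_or_lt_of_le h with h' | h'
        · exact le_of_eq (by rw [h'])
        · exact le_of_lt ((hxmono k m hkn' hm).1 h')
      have h2 := hehi hkn'
      linarith [hz.2]
  have hpA : ∀ j, j ≤ n+1 → p j ∈ A := fun j hj => (hmemA (p j)).2 (le_of_eq (habs j hj))
  -- part 1
  have hub : ∀ v ∈ (fun t => |(C K⁻¹ * P).eval t|) '' A, v ≤ 1 / |K| := by
    rintro v ⟨t, htA, rfl⟩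
    simp only
    rw [eval_mul, eval_C, abs_mul, abs_inv, one_div]
    have h1 := (hmemA t).1 htA
    calc |K|⁻¹ * |P.eval t| ≤ |K|⁻¹ * 1 :=
          mul_le_mul_of_nonneg_left h1 (by positivity)
    _ = |K|⁻¹ := mul_one _
  have hmem1 : (1:ℝ)/|K| ∈ (fun t => |(C K⁻¹ * P).eval t|) '' A := by
    refine ⟨p k, hpA k (by omega), ?_⟩
    simp only
    rw [eval_mul, eval_C, abs_mul, abs_inv, habs k (by omega), mul_one, one_div]
  have part1 : supNorm A (C K⁻¹ * P) = 1 / |K| := by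
    rw [_root_.supNorm]
    apply le_antisymm
    · exact csSup_le ⟨_, hmem1⟩ hub
    · exact le_csSup ⟨1/|K|, hub⟩ hmem1
  have hK2 : 0 < K^2 := by
    have := abs_pos.1 (lt_trans one_pos hK)
    positivity
  -- part 3
  have part3 : ∀ Q : ℝ[X], Q.degree ≤ (n + 1 : ℕ) → Q.eval 0 = 1 → 1 / |K| ≤ supNorm A Q := by
    intro Q hQdeg hQ0
    by_contra hlt
    push_neg at hlt
    rw [_root_.supNorm] at hlt
    have hbdd : BddAbove ((fun t => |Q.eval t|) '' A) :=
      (hAcomp.image_of_continuousOn (Q.continuous.abs.continuousOn)).bddAbove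
    have hsle : ∀ t ∈ A, |Q.eval t| < 1 / |K| := by
      intro t ht
      exact lt_of_le_of_lt (le_csSup hbdd ⟨t, ht, rfl⟩) hlt
    set R := C K⁻¹ * P - Q with hR
    have hReval : ∀ t, R.eval t = K⁻¹ * P.eval t - Q.eval t := by
      intro t; rw [hR]; simp
    have hR0 : R.eval 0 = 0 := by
      rw [hReval, ← hKdef, inv_mul_cancel₀ hKne, hQ0]; ring
    have hRne : R ≠ 0 := by
      intro h
      rw [hR] at h
      have hQeq : Q = C K⁻¹ * P := (sub_eq_zero.mp h).symm
      rw [hQeq] at hlt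
      have h2 : sSup ((fun t => |(C K⁻¹ * P).eval t|) '' A) = 1/|K| := by
        rw [← _root_.supNorm]; exact part1
      rw [h2] at hlt
      exact lt_irrefl _ hlt
    have hRdeg : R.natDegree ≤ n + 1 := by
      rw [hR]
      apply le_trans (natDegree_sub_le _ _)
      apply max_le
      · rw [natDegree_C_mul (inv_ne_zero hKne), hdeg]; omega
      · exact natDegree_le_iff_degree_le.2 hQdeg
    have hRsign : ∀ j, j ≤ n+1 → 0 < R.eval (p j) * (P.eval (p j) * K) := by
      intro j hj
      have ha : |P.eval (p j)| = 1 := habs j hj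
      have hq : |Q.eval (p j)| < 1/|K| := hsle _ (hpA j hj)
      have ha2 : (P.eval (p j))^2 = 1 := by
        rw [← sq_abs, ha]; norm_num
      rw [hReval]
      have hqK : |Q.eval (p j)| * |K| < 1 := by
        rw [lt_div_iff₀ (by positivity)] at hq
        exact hq
      have h1 : Q.eval (p j) * (P.eval (p j) * K) < 1 := by
        calc Q.eval (p j) * (P.eval (p j) * K) ≤ |Q.eval (p j) * (P.eval (p j) * K)| :=
              le_abs_self _
        _ = |Q.eval (p j)| * (|P.eval (p j)| * |K|) := by rw [abs_mul, abs_mul]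
        _ = |Q.eval (p j)| * |K| := by rw [ha, one_mul]
        _ < 1 := hqK
      have key : K⁻¹ * P.eval (p j) * (P.eval (p j) * K) = 1 := by
        have h2 : K⁻¹ * P.eval (p j) * (P.eval (p j) * K) = (P.eval (p j))^2 * (K⁻¹ * K) := by
          ring
        rw [h2, inv_mul_cancel₀ hKne, ha2, one_mul]
      rw [sub_mul, key]
      linarith
    have hRflip : ∀ j, j ≤ n → j ≠ k → R.eval (p j) * R.eval (p (j+1)) < 0 := by
      intro j hj hjk
      have h1 := hRsign j (by omega)
      have h2 := hRsign (j+1) (by omega)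
      have h3 := hflip j hj hjk
      have key : (R.eval (p j) * (P.eval (p j) * K)) * (R.eval (p (j+1)) * (P.eval (p (j+1)) * K))
          = (R.eval (p j) * R.eval (p (j+1))) * ((P.eval (p j) * P.eval (p (j+1))) * K^2) := by
        ring
      have hpos := mul_pos h1 h2
      rw [key] at hpos
      have hneg : (P.eval (p j) * P.eval (p (j+1))) * K^2 < 0 := mul_neg_of_neg_of_pos h3 hK2
      by_contra hc
      push_neg at hc
      have := mul_nonpos_of_nonneg_of_nonpos hc hneg.le
      linarith
    have hRsame : 0 < R.eval (p k) * R.eval (p (k+1)) := by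
      have h1 := hRsign k (by omega)
      have h2 := hRsign (k+1) (by omega)
      have key : (R.eval (p k) * (P.eval (p k) * K)) * (R.eval (p (k+1)) * (P.eval (p (k+1)) * K))
          = (R.eval (p k) * R.eval (p (k+1))) * ((P.eval (p k) * P.eval (p (k+1))) * K^2) := by
        ring
      have hpos := mul_pos h1 h2
      rw [key] at hpos
      have hpos2 : 0 < (P.eval (p k) * P.eval (p (k+1))) * K^2 := mul_pos hsame hK2
      by_contra hc
      push_neg at hc
      have := mul_nonpos_of_nonpos_of_nonneg hc hpos2.le
      linarith
    have hroot' : ∀ j : ℕ, ∃ z, j ≤ n → j ≠ k → p j < z ∧ z < p (j+1) ∧ R.eval z = 0 := by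
      intro j
      by_cases hjn : j ≤ n ∧ j ≠ k
      · obtain ⟨z, hz, hz0⟩ := rootIoo (hinc j hjn.1) (hRflip j hjn.1 hjn.2)
        exact ⟨z, fun _ _ => ⟨hz.1, hz.2, hz0⟩⟩
      · exact ⟨0, fun h1 h2 => absurd ⟨h1, h2⟩ hjn⟩
    choose r hr using hroot'
    set g : ℕ → ℝ := fun j => if j = k then 0 else r j with hg
    have hgIoo : ∀ j, j ≤ n → p j < g j ∧ g j < p (j+1) ∧ R.eval (g j) = 0 := by
      intro j hj
      by_cases hjk : j = k
      · simp only [hg, if_pos hjk]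
        subst hjk
        refine ⟨by rw [hpc2]; exact hd0, by rw [hpc3]; exact he0, hR0⟩
      · simp only [hg, if_neg hjk]
        exact hr j hj hjk
    have hple : ∀ i j : ℕ, i ≤ j → j ≤ n+1 → p i ≤ p j := by
      intro i j hij
      induction hij with
      | refl => intro _; exact le_rfl
      | @step m h ih =>
        intro hm
        exact le_trans (ih (by omega)) (hinc m (by omega)).le
    have hgmono : ∀ j1 j2, j1 < j2 → j2 ≤ n → g j1 < g j2 := by
      intro j1 j2 h12 h2
      have a1 := (hgIoo j1 (by omega)).2.1
      have a2 := (hgIoo j2 h2).1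
      have a3 := hple (j1+1) j2 (by omega) (by omega)
      linarith
    set S : Finset ℝ := (Finset.range (n+1)).image g with hgS
    have hScard : S.card = n+1 := by
      rw [hgS, Finset.card_image_of_injOn, Finset.card_range]
      intro a ha b hb hab
      rw [Finset.mem_coe, Finset.mem_range] at ha hb
      by_contra hne
      rcases lt_or_gt_of_ne hne with h | h
      · exact absurd hab (ne_of_lt (hgmono a b h (by omega)))
      · exact absurd hab.symm (ne_of_lt (hgmono b a h (by omega)))
    have hSsub : S ⊆ R.roots.toFinset := by
      intro z hz
      rw [hgS, Finset.mem_image] at hz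
      obtain ⟨j, hj, rfl⟩ := hz
      rw [Finset.mem_range] at hj
      exact Multiset.mem_toFinset.2 (mem_roots'.2 ⟨hRne, (hgIoo j (by omega)).2.2⟩)
    have hcardroots : Multiset.card R.roots ≤ n+1 := le_trans (card_roots' R) hRdeg
    have h0S : (0:ℝ) ∈ S := by
      rw [hgS, Finset.mem_image]
      exact ⟨k, Finset.mem_range.2 (by omega), by simp only [hg, if_pos rfl]⟩
    by_cases hm2 : 2 ≤ rootMultiplicity 0 R
    · have hsum : ∀ a ∈ S.erase 0, 1 ≤ R.roots.count a := by
        intro a ha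
        have haS := Finset.mem_of_mem_erase ha
        exact Multiset.one_le_count_iff_mem.2 (Multiset.mem_toFinset.1 (hSsub haS))
      have hcount0 : 2 ≤ R.roots.count 0 := by rw [count_roots]; exact hm2
      have big : n + 2 ≤ ∑ a ∈ S, R.roots.count a := by
        rw [← Finset.add_sum_erase S _ h0S]
        have h1 : (S.erase 0).card = n := by rw [Finset.card_erase_of_mem h0S, hScard]; omega
        have h2 : (S.erase 0).card ≤ ∑ a ∈ S.erase 0, R.roots.count a := by
          calc (S.erase 0).card = ∑ _a ∈ S.erase 0, 1 := by simp
          _ ≤ _ := Finset.sum_le_sum hsum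
        omega
      have hle : ∑ a ∈ S, R.roots.count a ≤ Multiset.card R.roots := by
        rw [← Multiset.toFinset_sum_count_eq R.roots]
        exact Finset.sum_le_sum_of_subset hSsub
      omega
    · have hmult1 : rootMultiplicity 0 R = 1 := by
        have h1 : 0 < rootMultiplicity 0 R := (rootMultiplicity_pos hRne).2 hR0
        omega
      have hfac : (X - C 0) * (R /ₘ (X - C 0)) = R := mul_divByMonic_eq_iff_isRoot.2 hR0
      set u := R /ₘ (X - C 0) with hu
      have hueval : ∀ t, R.eval t = t * u.eval t := by
        intro t; conv_lhs => rw [← hfac]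
        simp
      have hu0 : u.eval 0 ≠ 0 := by
        intro h
        have hdvd : (X - C 0)^2 ∣ R := by
          obtain ⟨w, hw⟩ := dvd_iff_isRoot.2 h
          exact ⟨w, by rw [← hfac, hw]; ring⟩
        have h2 := (le_rootMultiplicity_iff hRne).2 hdvd
        omega
      have hpk : p k < 0 := by rw [hpc2]; exact hd0
      have hpk1 : 0 < p (k+1) := by rw [hpc3]; exact he0
      have husign : u.eval (p k) * u.eval (p (k+1)) < 0 := by
        have h1 := hRsame
        rw [hueval (p k), hueval (p (k+1))] at h1
        have key : (p k * u.eval (p k)) * (p (k+1) * u.eval (p (k+1)))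
            = (p k * p (k+1)) * (u.eval (p k) * u.eval (p (k+1))) := by ring
        rw [key] at h1
        have hneg : p k * p (k+1) < 0 := mul_neg_of_neg_of_pos hpk hpk1
        by_contra hc
        push_neg at hc
        have := mul_nonpos_of_nonpos_of_nonneg hneg.le hc
        linarith
      obtain ⟨z, hzIoo, hz0⟩ := rootIoo (hinc k (by omega)) husign
      have hzne0 : z ≠ 0 := fun h => hu0 (h ▸ hz0)
      have hzR : R.eval z = 0 := by rw [hueval, hz0, mul_zero]
      have hznotS : z ∉ S := by
        intro hzS
        rw [hgS, Finset.mem_image] at hzS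
        obtain ⟨j, hj, hjz⟩ := hzS
        rw [Finset.mem_range] at hj
        rcases lt_trichotomy j k with h | h | h
        · have a1 := (hgIoo j (by omega)).2.1
          have a2 := hple (j+1) k (by omega) (by omega)
          have a3 : g j < z := by linarith [hzIoo.1]
          rw [hjz] at a3; exact lt_irrefl z a3
        · rw [h] at hjz
          simp only [hg, if_pos rfl] at hjz
          exact hzne0 hjz.symm
        · have a1 := (hgIoo j (by omega)).1
          have a2 := hple (k+1) j (by omega) (by omega)
          have a3 : z < g j := by linarith [hzIoo.2]
          rw [hjz] at a3; exact lt_irrefl z a3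
      have hcard2 : (insert z S).card = n+2 := by
        rw [Finset.card_insert_of_notMem hznotS, hScard]
      have hsub2 : insert z S ⊆ R.roots.toFinset := by
        intro a ha
        rcases Finset.mem_insert.1 ha with h | h
        · rw [h]; exact Multiset.mem_toFinset.2 (mem_roots'.2 ⟨hRne, hzR⟩)
        · exact hSsub h
      have hc1' := Finset.card_le_card hsub2
      have hc2' := Multiset.toFinset_card_le R.roots
      omega
  refine ⟨part1, ?_, part3⟩
  intro Q hQdeg hQ0
  refine part3 Q (le_trans hQdeg ?_) hQ0
  exact_mod_cast Nat.le_succ n
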